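/- Let $M$ be an $n \times n$ integer matrix of rank $r$ over $\mathbb{Q}$ (with $r \ge 1$), and let $p$ be a prime. Then $p^{\,r - r_p(M)}$ divides some nonzero $r \times r$ minor of $M$, where $r_p(M)$ is the rank of $M$ over $\mathbb{F}_p$. -/

import Mathlib

open Matrix Module

/-- Cramer applied to `A *ᵥ x` gives `det A • x`. -/
private lemma cramer_mulVec' {R : Type*} [CommRing R] {r : ℕ} [DecidableEq (Fin r)]
    (A : Matrix (Fin r) (Fin r) R) (x : Fin r → R) :
    Matrix.cramer A (A.mulVec x) = A.det • x := by
  rw [Matrix.cramer_eq_adjugate_mulVec, Matrix.mulVec_mulVec, Matrix.adjugate_mul,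
    Matrix.smul_mulVec, Matrix.one_mulVec]

/-- Rank of an arbitrary submatrix is at most the rank of the matrix (over a field). -/
private lemma rank_submatrix_le' {F : Type*} [Field F] {m n r : ℕ}
    (A : Matrix (Fin m) (Fin n) F) (f : Fin r → Fin m) (g : Fin r → Fin n) :
    (A.submatrix f g).rank ≤ A.rank := by
  classical
  have h1 : ((1 : Matrix (Fin m) (Fin m) F).submatrix f id) * A = A.submatrix f id := by
    ext i j
    rw [Matrix.mul_apply]
    simp [Matrix.one_apply, ite_mul, one_mul, zero_mul, Finset.sum_ite_eq]
  have h2 : (A.submatrix f id) * ((1 : Matrix (Fin n) (Fin n) F).submatrix id g) =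
      A.submatrix f g := by
    ext i j
    rw [Matrix.mul_apply]
    simp [Matrix.one_apply, mul_ite, mul_one, mul_zero, Finset.sum_ite_eq']
  have h3 : (A.submatrix f g).rank ≤ (A.submatrix f id).rank := by
    rw [← h2]; exact Matrix.rank_mul_le_left _ _
  have h4 : (A.submatrix f id).rank ≤ A.rank := by
    rw [← h1]; exact Matrix.rank_mul_le_right _ _
  exact h3.trans h4

/-- From rank `r` we can select `r` independent columns. -/
private lemma exists_cols_rank {F : Type*} [Field F] {m n : ℕ} (A : Matrix (Fin m) (Fin n) F)
    {r : ℕ} (h : A.rank = r) :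
    ∃ cols : Fin r → Fin n, Function.Injective cols ∧ (A.submatrix id cols).rank = r := by
  classical
  have hspan : finrank F (Submodule.span F (Set.range Aᵀ)) = r := by
    rw [← h, Matrix.rank_eq_finrank_span_cols]; rfl
  obtain ⟨s, hst, hsp, hli⟩ := exists_linearIndependent F (Set.range Aᵀ)
  have hsfin : s.Finite := (Set.finite_range Aᵀ).subset hst
  haveI : Fintype s := hsfin.fintype
  have hcard : Fintype.card s = r := by
    rw [← Set.toFinset_card, ← finrank_span_set_eq_card hli, hsp, hspan]
  let e : Fin r ≃ s := (Fintype.equivFinOfCardEq hcard).symm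
  have hmem : ∀ v : s, (v : Fin m → F) ∈ Set.range Aᵀ := fun v => hst v.2
  choose f hf using hmem
  refine ⟨fun i => f (e i), ?_, ?_⟩
  · intro i j hij
    have hij' : f (e i) = f (e j) := hij
    apply e.injective
    apply Subtype.ext
    rw [← hf (e i), ← hf (e j), hij']
  · have hT : (A.submatrix id (fun i => f (e i)))ᵀ = fun i => Aᵀ (f (e i)) := by
      ext i j; rfl
    have hrange : Set.range (fun i => Aᵀ (f (e i))) = s := by
      ext v
      constructor
      · rintro ⟨i, rfl⟩
        show Aᵀ (f (e i)) ∈ s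
        rw [hf (e i)]
        exact (e i).2
      · intro hv
        refine ⟨e.symm ⟨v, hv⟩, ?_⟩
        show Aᵀ (f (e (e.symm ⟨v, hv⟩))) = v
        rw [Equiv.apply_symm_apply, hf]
    rw [Matrix.rank_eq_finrank_span_cols,
      show (A.submatrix id fun i => f (e i)).col = fun i => Aᵀ (f (e i)) from hT, hrange, hsp, hspan]

/-- From rank `r` we can select a nonsingular `r × r` submatrix. -/
private lemma exists_submatrix_det_ne_zero {F : Type*} [Field F] {m n : ℕ}
    (A : Matrix (Fin m) (Fin n) F) {r : ℕ} (h : A.rank = r) :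
    ∃ (rows : Fin r → Fin m) (cols : Fin r → Fin n),
      Function.Injective rows ∧ Function.Injective cols ∧
        (A.submatrix rows cols).det ≠ 0 := by
  classical
  obtain ⟨cols, hcinj, hc⟩ := exists_cols_rank A h
  have hT : (A.submatrix id cols)ᵀ.rank = r := by
    rw [Matrix.rank_transpose, hc]
  obtain ⟨rows, hrinj, hrk⟩ := exists_cols_rank (A.submatrix id cols)ᵀ hT
  have hsq : ((A.submatrix id cols)ᵀ.submatrix id rows) = (A.submatrix rows cols)ᵀ := by
    ext i j; rfl
  rw [hsq, Matrix.rank_transpose] at hrk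
  refine ⟨rows, cols, hrinj, hcinj, ?_⟩
  intro hdet
  obtain ⟨v, hv, hmv⟩ := (Matrix.exists_mulVec_eq_zero_iff).mpr hdet
  -- v is a nonzero element of the kernel, contradicting rank r
  have hker : v ∈ LinearMap.ker (A.submatrix rows cols).mulVecLin := by
    simpa [Matrix.mulVecLin_apply] using hmv
  have hrn := LinearMap.finrank_range_add_finrank_ker (A.submatrix rows cols).mulVecLin
  rw [Module.finrank_fintype_fun_eq_card, Fintype.card_fin] at hrn
  have hkz : finrank F (LinearMap.ker (A.submatrix rows cols).mulVecLin) = 0 := by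
    have : (A.submatrix rows cols).rank = finrank F
        (LinearMap.range (A.submatrix rows cols).mulVecLin) := rfl
    omega
  have : LinearMap.ker (A.submatrix rows cols).mulVecLin = ⊥ :=
    Submodule.finrank_eq_zero.mp hkz
  rw [this, Submodule.mem_bot] at hker
  exact hv hker

/-- Key induction: if `W` is a `d`-dimensional subspace of the mod-`p` kernel of `A`,
then `p ^ d ∣ det A`. -/
private lemma pow_dvd_det_of_ker {p : ℕ} (hp : p.Prime) :
    ∀ d r : ℕ, ∀ A : Matrix (Fin r) (Fin r) ℤ,
      ∀ W : Submodule (ZMod p) (Fin r → ZMod p),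
        W ≤ LinearMap.ker (A.map (Int.cast : ℤ → ZMod p)).mulVecLin →
          d ≤ finrank (ZMod p) W → (p : ℤ) ^ d ∣ A.det := by
  haveI : Fact p.Prime := ⟨hp⟩
  intro d
  induction d with
  | zero => intro r A W _ _; simp
  | succ d ih =>
    intro r A W hWker hWd
    classical
    -- get a nonzero vector in W
    have hWne : W ≠ ⊥ := by
      intro hW
      rw [hW, finrank_bot] at hWd
      omega
    obtain ⟨v, hvW, hv0⟩ := Submodule.exists_mem_ne_zero_of_ne_bot hWne
    obtain ⟨i, hvi⟩ : ∃ i, v i ≠ 0 := by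
      by_contra hall
      push_neg at hall
      exact hv0 (funext hall)
    -- normalize so the i-th coordinate is 1
    set u : Fin r → ZMod p := (v i)⁻¹ • v with hu
    have huW : u ∈ W := W.smul_mem _ hvW
    have hui : u i = 1 := by
      simp [hu, inv_mul_cancel₀ hvi]
    -- integer lift of u
    set uz : Fin r → ℤ := fun j => ((u j).val : ℤ) with huz
    have huzi : uz i = 1 := by
      rw [huz]
      simp only [hui, ZMod.val_one_eq_one_mod]
      simp [Nat.mod_eq_of_lt hp.one_lt]
    have hcastu : ∀ j, ((uz j : ℤ) : ZMod p) = u j := by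
      intro j
      simp [huz, ZMod.natCast_val, ZMod.cast_id]
    -- A *ᵥ uz ≡ 0 mod p
    have hker : (A.map (Int.cast : ℤ → ZMod p)).mulVec u = 0 := by
      have := hWker huW
      simpa [Matrix.mulVecLin_apply] using this
    have hdvd : ∀ k, (p : ℤ) ∣ (A.mulVec uz) k := by
      intro k
      rw [← ZMod.intCast_zmod_eq_zero_iff_dvd]
      have : (((A.mulVec uz) k : ℤ) : ZMod p)
          = ((A.map (Int.cast : ℤ → ZMod p)).mulVec u) k := by
        simp only [Matrix.mulVec, dotProduct, Matrix.map_apply, Int.cast_sum,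
          Int.cast_mul]
        exact Finset.sum_congr rfl fun j _ => by rw [hcastu]
      rw [this, hker]
      rfl
    choose w hw using fun k => (hdvd k)
    have hAw : A.mulVec uz = (p : ℤ) • w := by
      funext k
      rw [hw k]
      simp
    set B : Matrix (Fin r) (Fin r) ℤ := A.updateCol i w with hB
    -- det A = p * det B
    have hdetA : A.det = (p : ℤ) * B.det := by
      have h1 : (A.updateCol i (A.mulVec uz)).det = A.det := by
        have := congrFun (cramer_mulVec' A uz) i
        rw [Matrix.cramer_apply] at this
        rw [this, Pi.smul_apply, huzi, smul_eq_mul, mul_one]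
      rw [← h1, hAw, Matrix.det_updateCol_smul, hB]
    -- the new kernel subspace
    set W' : Submodule (ZMod p) (Fin r → ZMod p) :=
      W ⊓ LinearMap.ker (LinearMap.proj i : (Fin r → ZMod p) →ₗ[ZMod p] ZMod p) with hW'
    have hW'ker : W' ≤ LinearMap.ker (B.map (Int.cast : ℤ → ZMod p)).mulVecLin := by
      rintro x ⟨hxW, hxi⟩
      have hxi' : x i = 0 := hxi
      have hx0 : (A.map (Int.cast : ℤ → ZMod p)).mulVec x = 0 := by
        have := hWker hxW
        simpa [Matrix.mulVecLin_apply] using this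
      rw [LinearMap.mem_ker, Matrix.mulVecLin_apply]
      funext k
      have : ((B.map (Int.cast : ℤ → ZMod p)).mulVec x) k
          = ((A.map (Int.cast : ℤ → ZMod p)).mulVec x) k := by
        simp only [Matrix.mulVec, dotProduct]
        refine Finset.sum_congr rfl fun j _ => ?_
        by_cases hj : j = i
        · subst hj; rw [hxi', mul_zero, mul_zero]
        · simp [hB, Matrix.map_apply, Matrix.updateCol_apply, hj]
      rw [this, hx0]
    -- dimension of W'
    have hW'd : d ≤ finrank (ZMod p) W' := by
      set K := LinearMap.ker (LinearMap.proj i : (Fin r → ZMod p) →ₗ[ZMod p] ZMod p) with hK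
      have h1 := Submodule.finrank_sup_add_finrank_inf_eq W K
      have h2 : finrank (ZMod p) ((W ⊔ K : Submodule (ZMod p) (Fin r → ZMod p)) :
          Submodule (ZMod p) (Fin r → ZMod p)) ≤ r := by
        have := Submodule.finrank_le (W ⊔ K : Submodule (ZMod p) (Fin r → ZMod p))
        rwa [Module.finrank_fintype_fun_eq_card, Fintype.card_fin] at this
      have h3 : r ≤ finrank (ZMod p) K + 1 := by
        have h4 := LinearMap.finrank_range_add_finrank_ker
          (LinearMap.proj i : (Fin r → ZMod p) →ₗ[ZMod p] ZMod p)
        rw [Module.finrank_fintype_fun_eq_card, Fintype.card_fin, ← hK] at h4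
        have h5 : finrank (ZMod p)
            (LinearMap.range (LinearMap.proj i : (Fin r → ZMod p) →ₗ[ZMod p] ZMod p)) ≤ 1 := by
          have := Submodule.finrank_le
            (LinearMap.range (LinearMap.proj i : (Fin r → ZMod p) →ₗ[ZMod p] ZMod p))
          rwa [finrank_self] at this
        omega
      have : finrank (ZMod p) W' = finrank (ZMod p)
          ((W ⊓ K : Submodule (ZMod p) (Fin r → ZMod p)) :
            Submodule (ZMod p) (Fin r → ZMod p)) := rfl
      omega
    have hdvdB := ih r B W' hW'ker hW'd
    rw [hdetA, pow_succ, mul_comm ((p : ℤ) ^ d) (p : ℤ)]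
    exact mul_dvd_mul_left _ hdvdB

/-- For a square integer matrix `A` of size `r`, `p ^ (r - rank_p A) ∣ det A`. -/
private lemma pow_dvd_det {p : ℕ} (hp : p.Prime) {r : ℕ} (A : Matrix (Fin r) (Fin r) ℤ) :
    (p : ℤ) ^ (r - (A.map (Int.cast : ℤ → ZMod p)).rank) ∣ A.det := by
  haveI : Fact p.Prime := ⟨hp⟩
  apply pow_dvd_det_of_ker hp _ r A
    (LinearMap.ker (A.map (Int.cast : ℤ → ZMod p)).mulVecLin) le_rfl
  have h1 := LinearMap.finrank_range_add_finrank_ker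
    (A.map (Int.cast : ℤ → ZMod p)).mulVecLin
  rw [Module.finrank_fintype_fun_eq_card, Fintype.card_fin] at h1
  have h2 : (A.map (Int.cast : ℤ → ZMod p)).rank = finrank (ZMod p)
      (LinearMap.range (A.map (Int.cast : ℤ → ZMod p)).mulVecLin) := rfl
  omega

theorem prime_pow_dvd_minor (n r : ℕ) (hr : 1 ≤ r) (p : ℕ) (hp : p.Prime)
    (M : Matrix (Fin n) (Fin n) ℤ)
    (hrank : (M.map (Int.cast : ℤ → ℚ)).rank = r) :
    ∃ rows cols : Fin r → Fin n, Function.Injective rows ∧ Function.Injective cols ∧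
      (M.submatrix rows cols).det ≠ 0 ∧
      (p : ℤ) ^ (r - (M.map (Int.cast : ℤ → ZMod p)).rank) ∣ (M.submatrix rows cols).det := by
  classical
  haveI : Fact p.Prime := ⟨hp⟩
  obtain ⟨rows, cols, hrinj, hcinj, hdet⟩ :=
    exists_submatrix_det_ne_zero (M.map (Int.cast : ℤ → ℚ)) hrank
  refine ⟨rows, cols, hrinj, hcinj, ?_, ?_⟩
  · intro h0
    apply hdet
    have h := RingHom.map_det (Int.castRingHom ℚ) (M.submatrix rows cols)
    rw [h0, map_zero] at h
    exact h.symm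
  · have hkey := pow_dvd_det hp (M.submatrix rows cols)
    have hle : ((M.submatrix rows cols).map (Int.cast : ℤ → ZMod p)).rank ≤
        (M.map (Int.cast : ℤ → ZMod p)).rank :=
      rank_submatrix_le' (M.map (Int.cast : ℤ → ZMod p)) rows cols
    exact dvd_trans (pow_dvd_pow _ (Nat.sub_le_sub_left hle r)) hkey
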